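/- Let n, r be natural numbers, A an n×(r+1) integer matrix with all entries in {0,1}, Q a symmetric (r+1)×(r+1) integer matrix, b : Fin n → ℤ with entries in {0,1}, and z ∈ {0,1} ⊆ ℤ. Let Q̃ be the top-left r×r block of Q, q : Fin r → ℤ the first r entries of the last column of Q, and u the bottom-right entry of Q; let A' be the matrix of the first r columns of A and a : Fin n → ℤ the last column of A; let b' : Fin n → ℤ be the {0,1}-vector with b' ≡ b + z•a entrywise mod 2, and Q' := Q̃ + 2z • diag(q). Then ∑ over bit vectors x : Fin (r+1) → ℤ with last entry x_r = z of i^{x ⬝ᵥ (Q.mulVec x)} • e_{red₂(A.mulVec x + b)} equals i^{z·u} • ∑ over bit vectors y : Fin r → ℤ of i^{y ⬝ᵥ (Q'.mulVec y)} • e_{red₂(A'.mulVec y + b')}, as functions (Fin n → ZMod 2) → ℂ. -/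

import Mathlib

open Matrix

/-- The integer lift of a `ZMod 2` vector: a bit vector. -/
def intify {r : ℕ} (v : Fin r → ZMod 2) : Fin r → ℤ := fun k => ((v k).val : ℤ)

/-- Entrywise reduction of an integer vector modulo 2. -/
def red₂ {n : ℕ} (x : Fin n → ℤ) : Fin n → ZMod 2 := fun j => (x j : ZMod 2)

/-- The indicator function (standard basis vector) of `v : Fin n → ZMod 2`. -/
def ind {n : ℕ} (v : Fin n → ZMod 2) : (Fin n → ZMod 2) → ℂ := fun y => if y = v then 1 else 0

lemma quad_snoc {r : ℕ} (Q : Matrix (Fin (r+1)) (Fin (r+1)) ℤ) (hQ : Q.IsSymm)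
    (y : Fin r → ℤ) (hy : ∀ k, y k * y k = y k) (z : ℤ) (hzz : z * z = z) :
    Fin.snoc y z ⬝ᵥ Q.mulVec (Fin.snoc y z)
      = z * Q (Fin.last r) (Fin.last r)
        + y ⬝ᵥ ((Q.submatrix Fin.castSucc Fin.castSucc
            + (2 * z) • Matrix.diagonal (fun k => Q (Fin.castSucc k) (Fin.last r))).mulVec y) := by
  have hsym : ∀ k, Q (Fin.last r) (Fin.castSucc k) = Q (Fin.castSucc k) (Fin.last r) :=
    fun k => hQ.apply _ _
  simp only [dotProduct, Matrix.mulVec, Fin.sum_univ_castSucc, Fin.snoc_castSucc,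
    Fin.snoc_last, Matrix.add_apply, Matrix.smul_apply, smul_eq_mul,
    Matrix.submatrix_apply, Matrix.diagonal_apply, dotProduct, mul_ite, mul_zero,
    Finset.sum_add_distrib, mul_add, add_mul, Finset.sum_ite_eq, Finset.mem_univ, if_true,
    hsym, Finset.mul_sum]
  ring_nf
  simp only [mul_ite, ite_mul, mul_zero, zero_mul, Finset.sum_ite_eq, Finset.mem_univ, if_true]
  have h2 : ∀ x : Fin r, y x * (z * Q x.castSucc (Fin.last r) * 2) * y x
      = z * Q x.castSucc (Fin.last r) * y x + z * y x * Q x.castSucc (Fin.last r) := fun x => by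
    linear_combination (z * 2 * Q x.castSucc (Fin.last r)) * hy x
  rw [Finset.sum_congr rfl fun x _ => h2 x, Finset.sum_add_distrib]
  linear_combination Q (Fin.last r) (Fin.last r) * hzz

/-- Fixing the final bit of the summation index of a quadratic form expansion
to the value `z` yields a smaller quadratic form expansion, with Gram matrix
`Q̃ + 2z·diag(q)`, expansion matrix the first `r` columns of `A`, offset vector
`b' ≡ b + z·a (mod 2)`, and global phase `i^{z·u}`. -/
theorem qfe_fix_final_bit
    (n r : ℕ) (Q : Matrix (Fin (r+1)) (Fin (r+1)) ℤ) (hQ : Q.IsSymm)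
    (A : Matrix (Fin n) (Fin (r+1)) ℤ) (hA : ∀ j c, A j c = 0 ∨ A j c = 1)
    (b : Fin n → ℤ) (hb : ∀ j, b j = 0 ∨ b j = 1)
    (z : ℤ) (hz : z = 0 ∨ z = 1)
    (b' : Fin n → ℤ) (hb'01 : ∀ j, b' j = 0 ∨ b' j = 1)
    (hb' : ∀ j, b' j ≡ b j + z * A j (Fin.last r) [ZMOD 2]) :
    (∑ v ∈ Finset.univ.filter (fun v : Fin (r+1) → ZMod 2 => intify v (Fin.last r) = z),
        (Complex.I ^ (intify v ⬝ᵥ Q.mulVec (intify v))) • ind (red₂ (A.mulVec (intify v) + b)))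
      =
    (Complex.I ^ (z * Q (Fin.last r) (Fin.last r))) •
      ∑ v : Fin r → ZMod 2,
        (Complex.I ^ (intify v ⬝ᵥ
            ((Q.submatrix Fin.castSucc Fin.castSucc
              + (2 * z) • Matrix.diagonal (fun k => Q (Fin.castSucc k) (Fin.last r))).mulVec
              (intify v)))) •
          ind (red₂ ((A.submatrix id Fin.castSucc).mulVec (intify v) + b')) := by
  have hz2 : (((z : ZMod 2)).val : ℤ) = z := by rcases hz with h | h <;> subst h <;> decide
  have hzz : z * z = z := by rcases hz with h | h <;> subst h <;> ring
  rw [Finset.smul_sum]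
  refine Finset.sum_nbij' (fun v k => v (Fin.castSucc k))
    (fun w => Fin.snoc w ((z : ZMod 2))) (fun _ _ => Finset.mem_univ _) ?_ ?_ ?_ ?_
  · intro w _
    simp only [Finset.mem_filter, Finset.mem_univ, true_and, intify, Fin.snoc_last]
    exact Finset.mem_filter.mpr ⟨Finset.mem_univ _, by simpa [intify, Fin.snoc_last] using hz2⟩
  · intro v hv
    have hlast : v (Fin.last r) = ((z : ℤ) : ZMod 2) := by
      have h := (Finset.mem_filter.mp hv).2
      have := congrArg (fun t : ℤ => (t : ZMod 2)) h
      simpa [intify] using this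
    funext k
    refine Fin.lastCases ?_ (fun k => ?_) k
    · simpa [Fin.snoc_last] using hlast.symm
    · simp
  · intro w _
    funext k
    simp
  · intro v hv
    have hlast : v (Fin.last r) = ((z : ℤ) : ZMod 2) := by
      have h := (Finset.mem_filter.mp hv).2
      have := congrArg (fun t : ℤ => (t : ZMod 2)) h
      simpa [intify] using this
    set w : Fin r → ZMod 2 := fun k => v (Fin.castSucc k) with hw
    have hvs : intify v = Fin.snoc (intify w) z := by
      funext k
      refine Fin.lastCases ?_ (fun k => ?_) k
      · simp [intify, hlast, hz2]
      · simp [intify, hw]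
    have hy : ∀ k, intify w k * intify w k = intify w k := by
      intro k
      have := ZMod.val_lt (w k)
      have h01 : (w k).val = 0 ∨ (w k).val = 1 := by omega
      rcases h01 with h | h <;> simp [intify, h]
    have hind : red₂ (A.mulVec (Fin.snoc (intify w) z) + b)
        = red₂ ((A.submatrix id Fin.castSucc).mulVec (intify w) + b') := by
      funext j
      simp only [red₂, Pi.add_apply, Matrix.mulVec, dotProduct, Fin.sum_univ_castSucc,
        Fin.snoc_castSucc, Fin.snoc_last, Matrix.submatrix_apply, id]
      rw [ZMod.intCast_eq_intCast_iff]
      have h := hb' j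
      rw [mul_comm (A j (Fin.last r)) z]
      simp only [Int.ModEq] at h ⊢
      omega
    rw [hvs, quad_snoc Q hQ (intify w) hy z hzz, hind,
      zpow_add₀ Complex.I_ne_zero, mul_smul]
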